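/- Let A: [0,∞) → G be a continuous path with A(0) = Id satisfying condition (**). Then for every v ∈ V \ {0}, the limit d(v) = lim_{t→∞} t^{-1} log‖ρ(A(t))v‖ exists; moreover the integer-time sequence (A(i))_{i∈ℕ} satisfies condition (*), and d(v) agrees with the weight lim_{i→∞} i^{-1} log‖ρ(A(i))v‖ computed from that sequence. -/

import Mathlib

open Filter Topology NormedSpace
open scoped LinearAlgebra.Projectivization

set_option linter.unusedSectionVars false

noncomputable section

namespace CSW

variable {E : Type*} [NormedAddCommGroup E] [InnerProductSpace ℂ E] [FiniteDimensional ℂ E]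
variable {V : Type*} [NormedAddCommGroup V] [InnerProductSpace ℂ V] [FiniteDimensional ℂ V]

/-- The exponential `e^T` of a bounded operator, as a unit (invertible element) of the algebra
of continuous linear endomorphisms. -/
def expUnit (T : E →L[ℂ] E) : (E →L[ℂ] E)ˣ where
  val := exp T
  inv := exp (-T)
  val_inv := by
    rw [← exp_add_of_commute_of_mem_ball (𝕂 := ℂ) (Commute.refl T).neg_right
      ((expSeries_radius_eq_top ℂ (E →L[ℂ] E)).symm ▸ edist_lt_top _ _)
      ((expSeries_radius_eq_top ℂ (E →L[ℂ] E)).symm ▸ edist_lt_top _ _), add_neg_cancel, exp_zero]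
  inv_val := by
    rw [← exp_add_of_commute_of_mem_ball (𝕂 := ℂ) (Commute.refl T).neg_left
      ((expSeries_radius_eq_top ℂ (E →L[ℂ] E)).symm ▸ edist_lt_top _ _)
      ((expSeries_radius_eq_top ℂ (E →L[ℂ] E)).symm ▸ edist_lt_top _ _), neg_add_cancel, exp_zero]

/-- `Bseq A i` is `B_i = A_i A_{i-1}⁻¹` (with the junk value `B_0 = 1`). -/
def Bseq (A : ℕ → (E →L[ℂ] E)ˣ) (i : ℕ) : (E →L[ℂ] E)ˣ := A i * (A (i - 1))⁻¹

/-- Condition (*): for any subsequence, after passing to a further subsequence, `B_{α+1}` and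
`B_{α+2}` both converge (in operator norm) to `g e^Λ g⁻¹` for some unitary `g`. -/
def CondStar (A : ℕ → (E →L[ℂ] E)ˣ) (Λ : E →L[ℂ] E) : Prop :=
  ∀ φ : ℕ → ℕ, StrictMono φ → ∃ ψ : ℕ → ℕ, StrictMono ψ ∧ ∃ g : (E →L[ℂ] E)ˣ,
    (g : E →L[ℂ] E) ∈ unitary (E →L[ℂ] E) ∧
    Tendsto (fun j => (Bseq A (φ (ψ j) + 1) : E →L[ℂ] E)) atTop
      (𝓝 ((g * expUnit Λ * g⁻¹ : (E →L[ℂ] E)ˣ) : E →L[ℂ] E)) ∧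
    Tendsto (fun j => (Bseq A (φ (ψ j) + 2) : E →L[ℂ] E)) atTop
      (𝓝 ((g * expUnit Λ * g⁻¹ : (E →L[ℂ] E)ˣ) : E →L[ℂ] E))

/-- Condition (*)' for a given gauge sequence `g`: `g 0 = 1`, each `g i` is unitary,
`B_i g_i e^{-Λ} g_i⁻¹ → Id` and `g_{i-1}⁻¹ g_i → Id`. -/
def CondStar' (A : ℕ → (E →L[ℂ] E)ˣ) (Λ : E →L[ℂ] E) (g : ℕ → (E →L[ℂ] E)ˣ) : Prop :=
  g 0 = 1 ∧ (∀ i, (g i : E →L[ℂ] E) ∈ unitary (E →L[ℂ] E)) ∧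
  Tendsto (fun i => ((Bseq A i * g i * expUnit (-Λ) * (g i)⁻¹ : (E →L[ℂ] E)ˣ) : E →L[ℂ] E))
    atTop (𝓝 1) ∧
  Tendsto (fun i => (((g (i - 1))⁻¹ * g i : (E →L[ℂ] E)ˣ) : E →L[ℂ] E)) atTop (𝓝 1)

/-- Membership in `G_Λ = {g ∈ G : g Λ g⁻¹ = Λ}`. -/
def InGΛ (Λ : E →L[ℂ] E) (h : (E →L[ℂ] E)ˣ) : Prop :=
  (h : E →L[ℂ] E) * Λ = Λ * (h : E →L[ℂ] E)

/-- Membership in `K_Λ = {g ∈ K : g Λ g⁻¹ = Λ}`. -/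
def InKΛ (Λ : E →L[ℂ] E) (h : (E →L[ℂ] E)ˣ) : Prop :=
  (h : E →L[ℂ] E) ∈ unitary (E →L[ℂ] E) ∧ InGΛ Λ h

/-- A (continuous, finite-dimensional) complex representation `ρ` of `G = GL(E)` on a Hermitian
vector space `V`, mapping unitary elements to unitary elements, together with a self-adjoint
operator `Λ_V` on `V` compatible with `Λ` via `ρ(e^{tΛ}) = e^{tΛ_V}`. -/
structure Rep (Λ : E →L[ℂ] E) (V : Type*) [NormedAddCommGroup V] [InnerProductSpace ℂ V]
    [FiniteDimensional ℂ V] where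
  ρ : (E →L[ℂ] E)ˣ →* (V →L[ℂ] V)ˣ
  continuous_ρ : Continuous fun u : (E →L[ℂ] E)ˣ => ((ρ u : (V →L[ℂ] V)ˣ) : V →L[ℂ] V)
  unitary_ρ : ∀ u : (E →L[ℂ] E)ˣ, (u : E →L[ℂ] E) ∈ unitary (E →L[ℂ] E) →
    ((ρ u : (V →L[ℂ] V)ˣ) : V →L[ℂ] V) ∈ unitary (V →L[ℂ] V)
  ΛV : V →L[ℂ] V
  selfAdjoint_ΛV : IsSelfAdjoint ΛV
  exp_eq : ∀ t : ℝ, ((ρ (expUnit ((t : ℂ) • Λ)) : (V →L[ℂ] V)ˣ) : V →L[ℂ] V)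
      = exp ((t : ℂ) • ΛV)

variable {Λ : E →L[ℂ] E}

theorem unit_apply_ne_zero (u : (V →L[ℂ] V)ˣ) {v : V} (hv : v ≠ 0) :
    (u : V →L[ℂ] V) v ≠ 0 := by
  intro h
  apply hv
  have h2 : (((u⁻¹ : (V →L[ℂ] V)ˣ) : V →L[ℂ] V) * (u : V →L[ℂ] V)) v = 0 := by
    rw [ContinuousLinearMap.mul_apply, h, map_zero]
  rwa [Units.inv_mul, ContinuousLinearMap.one_apply] at h2

theorem unit_apply_injective (u : (V →L[ℂ] V)ˣ) :
    Function.Injective ((u : V →L[ℂ] V) : V → V) := by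
  intro a b hab
  have h2 := congrArg (fun x => ((u⁻¹ : (V →L[ℂ] V)ˣ) : V →L[ℂ] V) x) hab
  simpa [← ContinuousLinearMap.mul_apply, Units.inv_mul] using h2

/-- `f_i(v) = log ‖ρ(A_i) v‖`. -/
def fseq (R : Rep Λ V) (A : ℕ → (E →L[ℂ] E)ˣ) (v : V) (i : ℕ) : ℝ :=
  Real.log ‖(R.ρ (A i) : V →L[ℂ] V) v‖

/-- The quotient topology on the projectivization of a topological vector space. -/
instance : TopologicalSpace (ℙ ℂ V) := instTopologicalSpaceQuotient

/-- The natural action of `GL(E)` on `ℙ(V)` through the representation `R`. -/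
def pact (R : Rep Λ V) (u : (E →L[ℂ] E)ˣ) : ℙ ℂ V → ℙ ℂ V :=
  Projectivization.map (((R.ρ u : (V →L[ℂ] V)ˣ) : V →L[ℂ] V) : V →ₗ[ℂ] V)
    (unit_apply_injective _)

/-- The limit set `Lim(v) ⊆ ℙ(V)`: the union of the `ρ(K_Λ)`-orbits of all subsequential limits
of `[ρ(g_i⁻¹ A_i) v]`. -/
def LimSet (R : Rep Λ V) (A g : ℕ → (E →L[ℂ] E)ˣ) {v : V} (hv : v ≠ 0) :
    Set (ℙ ℂ V) :=
  {y | ∃ (w : V) (hw : w ≠ 0) (k : (E →L[ℂ] E)ˣ), InKΛ Λ k ∧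
    y = Projectivization.mk ℂ ((R.ρ k : V →L[ℂ] V) w) (unit_apply_ne_zero _ hw) ∧
    ∃ φ : ℕ → ℕ, StrictMono φ ∧
      Tendsto (fun j => Projectivization.mk ℂ
          ((R.ρ ((g (φ j))⁻¹ * A (φ j)) : V →L[ℂ] V) v) (unit_apply_ne_zero _ hv))
        atTop (𝓝 (Projectivization.mk ℂ w hw))}

/-- The eigenspace `U` of `Λ` with (real) eigenvalue `c`. -/
def eigU (Λ : E →L[ℂ] E) (c : ℝ) : Submodule ℂ E :=
  Module.End.eigenspace (Λ : E →ₗ[ℂ] E) (c : ℂ)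

/-- The weight `d(v) = lim_i i⁻¹ log ‖A_i v‖` for the standard representation of `GL(E)` on `E`
(a junk value if the limit does not exist). -/
def dstd (A : ℕ → (E →L[ℂ] E)ˣ) (v : E) : ℝ :=
  limUnder atTop fun i : ℕ => Real.log ‖(A i : E →L[ℂ] E) v‖ / i

/-- `p_s = Σ_{k ≤ s} n_k` where `n_k = dim U_k`. -/
def psum (Λ : E →L[ℂ] E) {r : ℕ} (lam : Fin r → ℝ) (s : Fin r) : ℕ :=
  ∑ k ∈ Finset.univ.filter (fun k => k ≤ s), Module.finrank ℂ (eigU Λ (lam k))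

/-- `q_s = Σ_{k ≥ s} n_k` where `n_k = dim U_k`. -/
def qsum (Λ : E →L[ℂ] E) {r : ℕ} (lam : Fin r → ℝ) (s : Fin r) : ℕ :=
  ∑ k ∈ Finset.univ.filter (fun k => s ≤ k), Module.finrank ℂ (eigU Λ (lam k))

/-- A model for the `p`-th exterior power of `E`, with its induced Hermitian metric
(determined by `⟨x₁∧⋯∧x_p, y₁∧⋯∧y_p⟩ = det(⟨x_i, y_j⟩)`), the induced representation of `GL(E)`,
and the induced self-adjoint operator (the derivation extension of `Λ`, pinned down by
`Rep.exp_eq` and equivariance of `wedge`). -/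
structure ExtPower (Λ : E →L[ℂ] E) (p : ℕ) where
  P : Type
  [normed : NormedAddCommGroup P]
  [ips : InnerProductSpace ℂ P]
  [fd : FiniteDimensional ℂ P]
  R : Rep Λ P
  wedge : E [⋀^Fin p]→ₗ[ℂ] P
  wedge_map : ∀ (u : (E →L[ℂ] E)ˣ) (x : Fin p → E),
    ((R.ρ u : (P →L[ℂ] P)ˣ) : P →L[ℂ] P) (wedge x) = wedge fun j => (u : E →L[ℂ] E) (x j)
  wedge_inner : ∀ x y : Fin p → E,
    (inner ℂ (wedge x) (wedge y) : ℂ) = (Matrix.of fun i j : Fin p => (inner ℂ (x i) (y j) : ℂ)).det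
  wedge_span : Submodule.span ℂ (Set.range wedge) = ⊤

attribute [instance] ExtPower.normed ExtPower.ips ExtPower.fd

/-- A bundle of the choices made in Section 2 of the paper: a gauge sequence `g` as in (*)',
the filtration `V_s` (with `V_{r+1} = 0`), complements `W_s` with `V_s = W_s ⊕ V_{s+1}` and
`Lim(W_s) = {[⋀^{n_s} U_s]}`, and identifications `C_i → Id` carrying `g_i⁻¹ A_i · W_s`
onto `U_s`. -/
structure Choices (A : ℕ → (E →L[ℂ] E)ˣ) (Λ : E →L[ℂ] E) (r : ℕ) (lam : Fin r → ℝ)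
    (EP : ∀ p : ℕ, ExtPower Λ p) where
  g : ℕ → (E →L[ℂ] E)ˣ
  hg : CondStar' A Λ g
  Vsub : Fin (r + 1) → Submodule ℂ E
  hVsub : ∀ s : Fin r, (Vsub s.castSucc : Set E) = {v : E | v = 0 ∨ dstd A v ≤ lam s}
  hVlast : Vsub (Fin.last r) = ⊥
  W : Fin r → Submodule ℂ E
  hW_sup : ∀ s : Fin r, W s ⊔ Vsub s.succ = Vsub s.castSucc
  hW_inf : ∀ s : Fin r, W s ⊓ Vsub s.succ = ⊥
  hW_lim : ∀ s : Fin r, ∀ b : Fin (Module.finrank ℂ (eigU Λ (lam s))) → E,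
    LinearIndependent ℂ b → Submodule.span ℂ (Set.range b) = W s →
    ∀ c : Fin (Module.finrank ℂ (eigU Λ (lam s))) → E,
    LinearIndependent ℂ c → Submodule.span ℂ (Set.range c) = eigU Λ (lam s) →
    ∃ (hb : (EP (Module.finrank ℂ (eigU Λ (lam s)))).wedge b ≠ 0)
      (hc : (EP (Module.finrank ℂ (eigU Λ (lam s)))).wedge c ≠ 0),
      LimSet (EP (Module.finrank ℂ (eigU Λ (lam s)))).R A g hb
        = {Projectivization.mk ℂ ((EP (Module.finrank ℂ (eigU Λ (lam s)))).wedge c) hc}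
  C : ℕ → (E →L[ℂ] E)ˣ
  hC_lim : Tendsto (fun i => (C i : E →L[ℂ] E)) atTop (𝓝 1)
  hC_map : ∀ (s : Fin r) (i : ℕ),
    Submodule.map ((((C i * (g i)⁻¹ * A i : (E →L[ℂ] E)ˣ) : E →L[ℂ] E) : E →ₗ[ℂ] E)) (W s)
      = eigU Λ (lam s)

/-- A model for the symmetric algebra `Sym(E*) = ⊕_k Sym^k(E*)` on the dual of `E`:
each graded piece is a Hermitian space carrying a compatible representation of `GL(E)`
(induced by the dual of the standard representation), `gen` identifies the degree-one piece
with `E*` equivariantly, and the product is bilinear, equivariant, has no zero divisors, and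
together with the generators spans each graded piece. -/
structure SymModel (Λ : E →L[ℂ] E) where
  P : ℕ → Type
  [normed : ∀ k, NormedAddCommGroup (P k)]
  [ips : ∀ k, InnerProductSpace ℂ (P k)]
  [fd : ∀ k, FiniteDimensional ℂ (P k)]
  R : ∀ k, Rep Λ (P k)
  mul : ∀ {k l : ℕ}, P k →ₗ[ℂ] P l →ₗ[ℂ] P (k + l)
  mul_equivariant : ∀ {k l : ℕ} (u : (E →L[ℂ] E)ˣ) (x : P k) (y : P l),
    (((R (k + l)).ρ u : (P (k + l) →L[ℂ] P (k + l))ˣ) : P (k + l) →L[ℂ] P (k + l)) (mul x y)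
      = mul ((((R k).ρ u : (P k →L[ℂ] P k)ˣ) : P k →L[ℂ] P k) x)
            ((((R l).ρ u : (P l →L[ℂ] P l)ˣ) : P l →L[ℂ] P l) y)
  mul_ne_zero : ∀ {k l : ℕ} {x : P k} {y : P l}, x ≠ 0 → y ≠ 0 → mul x y ≠ 0
  gen : (E →L[ℂ] ℂ) ≃ₗ[ℂ] P 1
  gen_equivariant : ∀ (u : (E →L[ℂ] E)ˣ) (l : E →L[ℂ] ℂ),
    (((R 1).ρ u : (P 1 →L[ℂ] P 1)ˣ) : P 1 →L[ℂ] P 1) (gen l)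
      = gen (l.comp (((u⁻¹ : (E →L[ℂ] E)ˣ) : E →L[ℂ] E)))
  span_gen_mul : ∀ k : ℕ, Submodule.span ℂ
      {z : P (k + 1) | ∃ (x : P k) (l : E →L[ℂ] ℂ), z = mul x (gen l)} = ⊤

attribute [instance] SymModel.normed SymModel.ips SymModel.fd

/-- Condition (**) for a continuous path `A : [0,∞) → G`: for any sequence `t_i → ∞`, after
passing to a subsequence, the paths `t ∈ [0,2] ↦ A(t_i + t) A(t_i)⁻¹` converge uniformly to
`t ↦ g e^{tΛ} g⁻¹` for some unitary `g`. -/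
def CondStarStar (Ap : ℝ → (E →L[ℂ] E)ˣ) (Λ : E →L[ℂ] E) : Prop :=
  ∀ u : ℕ → ℝ, Tendsto u atTop atTop → ∃ ψ : ℕ → ℕ, StrictMono ψ ∧
    ∃ g : (E →L[ℂ] E)ˣ, (g : E →L[ℂ] E) ∈ unitary (E →L[ℂ] E) ∧
      TendstoUniformlyOn
        (fun j t => ((Ap (u (ψ j) + t) * (Ap (u (ψ j)))⁻¹ : (E →L[ℂ] E)ˣ) : E →L[ℂ] E))
        (fun t => ((g * expUnit ((t : ℂ) • Λ) * g⁻¹ : (E →L[ℂ] E)ˣ) : E →L[ℂ] E))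
        atTop (Set.Icc (0 : ℝ) 2)

/-! ### Auxiliary lemmas -/

theorem star_val_of_unitary {M : Type*} [Monoid M] [StarMul M] (u : Mˣ)
    (h : (u : M) ∈ unitary M) : star (u : M) = ((u⁻¹ : Mˣ) : M) := by
  have h1 : star (u : M) * (u : M) = 1 := h.1
  calc star (u : M) = star (u : M) * ((u : M) * ((u⁻¹ : Mˣ) : M)) := by
        rw [Units.mul_inv, mul_one]
    _ = ((u⁻¹ : Mˣ) : M) := by rw [← mul_assoc, h1, one_mul]

theorem tendsto_units_of_tendsto_val {M : Type*} [NormedRing M] [CompleteSpace M]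
    {u : ℕ → Mˣ} {v : Mˣ} (h : Tendsto (fun n => (u n : M)) atTop (𝓝 (v : M))) :
    Tendsto u atTop (𝓝 v) :=
  (Units.isOpenEmbedding_val.tendsto_nhds_iff).2 h

theorem expUnit_two_smul (T : E →L[ℂ] E) :
    expUnit ((2:ℂ) • T) = expUnit T * expUnit T := by
  apply Units.ext
  show exp ((2:ℂ) • T) = exp T * exp T
  rw [two_smul, exp_add_of_commute_of_mem_ball (𝕂 := ℂ) (Commute.refl T)
    ((expSeries_radius_eq_top ℂ (E →L[ℂ] E)).symm ▸ edist_lt_top _ _)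
    ((expSeries_radius_eq_top ℂ (E →L[ℂ] E)).symm ▸ edist_lt_top _ _)]

theorem unit_inv_apply_apply (u : (V →L[ℂ] V)ˣ) (x : V) :
    ((u⁻¹ : (V →L[ℂ] V)ˣ) : V →L[ℂ] V) ((u : V →L[ℂ] V) x) = x := by
  rw [← ContinuousLinearMap.mul_apply, Units.inv_mul, ContinuousLinearMap.one_apply]

theorem rho_expUnit_val (R : Rep Λ V) :
    ((R.ρ (expUnit Λ) : (V →L[ℂ] V)ˣ) : V →L[ℂ] V) = exp R.ΛV := by
  have := R.exp_eq 1
  simpa using this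

theorem rho_expUnit_two_val (R : Rep Λ V) :
    ((R.ρ (expUnit ((2:ℂ) • Λ)) : (V →L[ℂ] V)ˣ) : V →L[ℂ] V) = exp ((2:ℂ) • R.ΛV) := by
  have := R.exp_eq 2
  simpa using this

theorem rho_conj_selfAdjoint (R : Rep Λ V) (g : (E →L[ℂ] E)ˣ)
    (hg : (g : E →L[ℂ] E) ∈ unitary (E →L[ℂ] E)) :
    IsSelfAdjoint ((R.ρ (g * expUnit Λ * g⁻¹) : (V →L[ℂ] V)ˣ) : V →L[ℂ] V) := by
  have hstar : star ((R.ρ g : (V →L[ℂ] V)ˣ) : V →L[ℂ] V)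
      = (((R.ρ g)⁻¹ : (V →L[ℂ] V)ˣ) : V →L[ℂ] V) :=
    star_val_of_unitary _ (R.unitary_ρ g hg)
  have hval : ((R.ρ (g * expUnit Λ * g⁻¹) : (V →L[ℂ] V)ˣ) : V →L[ℂ] V)
      = ((R.ρ g : (V →L[ℂ] V)ˣ) : V →L[ℂ] V) * exp R.ΛV
        * (((R.ρ g)⁻¹ : (V →L[ℂ] V)ˣ) : V →L[ℂ] V) := by
    rw [map_mul, map_mul, map_inv, Units.val_mul, Units.val_mul, rho_expUnit_val]
  rw [IsSelfAdjoint, hval]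
  rw [star_mul, star_mul, ← hstar, star_star]
  rw [star_exp, R.selfAdjoint_ΛV.star_eq]
  rw [mul_assoc]

theorem sa_norm_sq_le {Q : V →L[ℂ] V} (hQ : IsSelfAdjoint Q) (y : V) :
    ‖Q y‖ ^ 2 ≤ ‖Q (Q y)‖ * ‖y‖ := by
  have hadj : ContinuousLinearMap.adjoint Q = Q :=
    ContinuousLinearMap.isSelfAdjoint_iff'.1 hQ
  have h1 := ContinuousLinearMap.adjoint_inner_left Q y (Q y)
  rw [hadj] at h1
  have h2 : (inner ℂ (Q (Q y)) y : ℂ) = ((‖Q y‖ : ℂ)) ^ 2 := by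
    rw [h1, inner_self_eq_norm_sq_to_K]; rfl
  have h3 := norm_inner_le_norm (𝕜 := ℂ) (Q (Q y)) y
  rw [h2] at h3
  calc ‖Q y‖ ^ 2 = ‖((‖Q y‖ : ℂ)) ^ 2‖ := by
        rw [norm_pow, Complex.norm_real, Real.norm_eq_abs, abs_norm]
    _ ≤ ‖Q (Q y)‖ * ‖y‖ := h3

theorem sa_eq_smul {Q : V →L[ℂ] V} (hQ : IsSelfAdjoint Q) {y : V} (hy : ‖y‖ = 1)
    (hQy : Q y ≠ 0) (heq : ‖Q (Q y)‖ = ‖Q y‖ ^ 2) :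
    Q (Q y) = ((‖Q y‖ ^ 2 : ℝ) : ℂ) • y := by
  have hadj : ContinuousLinearMap.adjoint Q = Q :=
    ContinuousLinearMap.isSelfAdjoint_iff'.1 hQ
  have h1 := ContinuousLinearMap.adjoint_inner_left Q y (Q y)
  rw [hadj] at h1
  have h2 : (inner ℂ (Q (Q y)) y : ℂ) = ((‖Q y‖ : ℂ)) ^ 2 := by
    rw [h1, inner_self_eq_norm_sq_to_K]; rfl
  have hQQy : Q (Q y) ≠ 0 := by
    intro h
    rw [h, norm_zero] at heq
    exact hQy (norm_eq_zero.1 ((pow_eq_zero_iff two_ne_zero).1 heq.symm))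
  have hy0 : y ≠ 0 := by intro h; rw [h, norm_zero] at hy; norm_num at hy
  have hnormeq : ‖(inner ℂ (Q (Q y)) y : ℂ)‖ = ‖Q (Q y)‖ * ‖y‖ := by
    rw [h2, hy, mul_one, heq, norm_pow, Complex.norm_real, Real.norm_eq_abs, abs_norm]
  obtain ⟨r, hr0, hry⟩ := (norm_inner_eq_norm_iff hQQy hy0).1 hnormeq
  have hQyn : (‖Q y‖ : ℂ) ≠ 0 := by
    simpa using norm_ne_zero_iff.2 hQy
  set z := Q (Q y) with hz
  -- hry : y = r • z
  have hzz : (inner ℂ z z : ℂ) = ((‖z‖ : ℂ)) ^ 2 := by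
    rw [inner_self_eq_norm_sq_to_K]; rfl
  have h5 : (inner ℂ z y : ℂ) = r * ((‖z‖ : ℂ)) ^ 2 := by
    rw [hry, inner_smul_right, hzz]
  have h6 : r * ((‖z‖ : ℂ)) ^ 2 = ((‖Q y‖ : ℂ)) ^ 2 := by rw [← h5, h2]
  have hnorms : (‖z‖ : ℂ) = ((‖Q y‖ : ℂ)) ^ 2 := by
    rw [hz, heq]; push_cast; ring
  rw [hnorms] at h6
  have hx : ((‖Q y‖ : ℂ) ^ 2) ≠ 0 := pow_ne_zero 2 hQyn
  have h7 : r * (‖Q y‖ : ℂ) ^ 2 = 1 := by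
    apply mul_right_cancel₀ hx
    rw [one_mul]
    linear_combination h6
  have hrinv : r⁻¹ = (‖Q y‖ : ℂ) ^ 2 := inv_eq_of_mul_eq_one_right h7
  have hQQ : z = r⁻¹ • y := by
    rw [hry, smul_smul, inv_mul_cancel₀ hr0, one_smul]
  rw [hQQ, hrinv]
  congr 1
  push_cast
  ring

/-! ### The sequences `w`, `a`, `y` -/

def wseq (R : Rep Λ V) (A : ℕ → (E →L[ℂ] E)ˣ) (v : V) (i : ℕ) : V :=
  (R.ρ (A i) : V →L[ℂ] V) v

def aseq (R : Rep Λ V) (A : ℕ → (E →L[ℂ] E)ˣ) (v : V) (i : ℕ) : ℝ :=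
  fseq R A v (i + 1) - fseq R A v i

def yseq (R : Rep Λ V) (A : ℕ → (E →L[ℂ] E)ˣ) (v : V) (i : ℕ) : V :=
  ‖wseq R A v i‖⁻¹ • wseq R A v i

variable (R : Rep Λ V) (A : ℕ → (E →L[ℂ] E)ˣ) {v : V}

theorem wseq_ne (hv : v ≠ 0) (i : ℕ) : wseq R A v i ≠ 0 :=
  unit_apply_ne_zero _ hv

theorem wseq_norm_ne (hv : v ≠ 0) (i : ℕ) : ‖wseq R A v i‖ ≠ 0 :=
  norm_ne_zero_iff.2 (wseq_ne R A hv i)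

theorem fseq_eq (i : ℕ) : fseq R A v i = Real.log ‖wseq R A v i‖ := rfl

theorem yseq_norm (hv : v ≠ 0) (i : ℕ) : ‖yseq R A v i‖ = 1 := by
  have h : ((‖wseq R A v i‖ : ℝ))⁻¹ • wseq R A v i = yseq R A v i := rfl
  rw [← h]
  exact norm_smul_inv_norm (𝕜 := ℝ) (wseq_ne R A hv i)

theorem rho_Bseq_wseq (i : ℕ) :
    (R.ρ (Bseq A (i + 1)) : V →L[ℂ] V) (wseq R A v i) = wseq R A v (i + 1) := by
  have e1 : Bseq A (i + 1) = A (i + 1) * (A i)⁻¹ := by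
    simp [Bseq]
  rw [e1, map_mul, map_inv, Units.val_mul, ContinuousLinearMap.mul_apply]
  rw [show wseq R A v i = (R.ρ (A i) : V →L[ℂ] V) v from rfl, unit_inv_apply_apply]
  rfl

theorem rho_Bseq_yseq (i : ℕ) :
    (R.ρ (Bseq A (i + 1)) : V →L[ℂ] V) (yseq R A v i)
      = ‖wseq R A v i‖⁻¹ • wseq R A v (i + 1) := by
  rw [show yseq R A v i = ‖wseq R A v i‖⁻¹ • wseq R A v i from rfl,
    ContinuousLinearMap.map_smul_of_tower, rho_Bseq_wseq]

theorem aseq_eq (hv : v ≠ 0) (i : ℕ) :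
    aseq R A v i = Real.log ‖(R.ρ (Bseq A (i + 1)) : V →L[ℂ] V) (yseq R A v i)‖ := by
  rw [rho_Bseq_yseq, norm_smul, norm_inv, norm_norm,
    Real.log_mul (inv_ne_zero (wseq_norm_ne R A hv i)) (wseq_norm_ne R A hv (i + 1)),
    Real.log_inv]
  show fseq R A v (i + 1) - fseq R A v i = _
  rw [fseq_eq, fseq_eq]
  ring

theorem yseq_succ (hv : v ≠ 0) (i : ℕ) :
    yseq R A v (i + 1)
      = ‖(R.ρ (Bseq A (i + 1)) : V →L[ℂ] V) (yseq R A v i)‖⁻¹ •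
          (R.ρ (Bseq A (i + 1)) : V →L[ℂ] V) (yseq R A v i) := by
  rw [rho_Bseq_yseq, norm_smul, norm_inv, norm_norm, smul_smul]
  show ‖wseq R A v (i+1)‖⁻¹ • wseq R A v (i+1) = _
  congr 1
  rw [mul_inv, inv_inv]
  field_simp [wseq_norm_ne R A hv i, wseq_norm_ne R A hv (i + 1)]

/-! ### The master subsequence lemma -/

theorem master {Λ : E →L[ℂ] E} {A : ℕ → (E →L[ℂ] E)ˣ} (hstar : CondStar A Λ) (R : Rep Λ V)
    {v : V} (hv : v ≠ 0) {φ : ℕ → ℕ} (hφ : StrictMono φ) :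
    ∃ θ : ℕ → ℕ, StrictMono θ ∧ ∃ c c' : ℝ, c ≤ c' ∧
      (c = c' → Module.End.HasEigenvalue
        (↑(exp ((2:ℂ) • R.ΛV)) : Module.End ℂ V) (((Real.exp c) ^ 2 : ℝ) : ℂ)) ∧
      Tendsto (fun j => aseq R A v (φ (θ j))) atTop (𝓝 c) ∧
      Tendsto (fun j => aseq R A v (φ (θ j) + 1)) atTop (𝓝 c') := by
  obtain ⟨ψ, hψ, g, hgu, hB1, hB2⟩ := hstar φ hφ
  obtain ⟨ylim, hylims, θ', hθ', hylim⟩ := (isCompact_sphere (0:V) 1).tendsto_subseq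
    (x := fun j => yseq R A v (φ (ψ j))) (fun j => by
      simp only [Metric.mem_sphere, dist_zero_right]
      exact yseq_norm R A hv _)
  refine ⟨ψ ∘ θ', hψ.comp hθ', ?_⟩
  have hylimn : ‖ylim‖ = 1 := by simpa using hylims
  have hylim0 : ylim ≠ 0 := by
    intro h; rw [h, norm_zero] at hylimn; norm_num at hylimn
  set u : (E →L[ℂ] E)ˣ := g * expUnit Λ * g⁻¹ with hu
  set Q : V →L[ℂ] V := (R.ρ u : V →L[ℂ] V) with hQdef
  have hQsa : IsSelfAdjoint Q := rho_conj_selfAdjoint R g hgu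
  have hρ1 : Tendsto (fun j => ((R.ρ (Bseq A (φ (ψ (θ' j)) + 1)) : (V →L[ℂ] V)ˣ) : V →L[ℂ] V))
      atTop (𝓝 Q) := by
    have h0 : Tendsto (fun j => Bseq A (φ (ψ j) + 1)) atTop (𝓝 u) :=
      tendsto_units_of_tendsto_val hB1
    exact (R.continuous_ρ.tendsto u).comp (h0.comp hθ'.tendsto_atTop)
  have hρ2 : Tendsto (fun j => ((R.ρ (Bseq A (φ (ψ (θ' j)) + 2)) : (V →L[ℂ] V)ˣ) : V →L[ℂ] V))
      atTop (𝓝 Q) := by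
    have h0 : Tendsto (fun j => Bseq A (φ (ψ j) + 2)) atTop (𝓝 u) :=
      tendsto_units_of_tendsto_val hB2
    exact (R.continuous_ρ.tendsto u).comp (h0.comp hθ'.tendsto_atTop)
  have hyconv : Tendsto (fun j => yseq R A v (φ (ψ (θ' j)))) atTop (𝓝 ylim) := hylim
  have happly : Tendsto (fun j =>
      ((R.ρ (Bseq A (φ (ψ (θ' j)) + 1)) : (V →L[ℂ] V)ˣ) : V →L[ℂ] V)
        (yseq R A v (φ (ψ (θ' j))))) atTop (𝓝 (Q ylim)) :=
    (isBoundedBilinearMap_apply.continuous.tendsto (Q, ylim)).comp (hρ1.prodMk_nhds hyconv)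
  have hQy0 : Q ylim ≠ 0 := unit_apply_ne_zero (R.ρ u) hylim0
  have hQyn : ‖Q ylim‖ ≠ 0 := norm_ne_zero_iff.2 hQy0
  have hQypos : (0:ℝ) < ‖Q ylim‖ := norm_pos_iff.2 hQy0
  set ynext : V := ‖Q ylim‖⁻¹ • Q ylim with hynext
  have hynextn : ‖ynext‖ = 1 := by
    have h : ((‖Q ylim‖ : ℝ))⁻¹ • Q ylim = ynext := rfl
    rw [← h]; exact norm_smul_inv_norm (𝕜 := ℝ) hQy0
  have hynext0 : ynext ≠ 0 := by
    intro h; rw [h, norm_zero] at hynextn; norm_num at hynextn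
  have hQyn0 : Q ynext ≠ 0 := unit_apply_ne_zero (R.ρ u) hynext0
  have hQynn : ‖Q ynext‖ ≠ 0 := norm_ne_zero_iff.2 hQyn0
  have hQynpos : (0:ℝ) < ‖Q ynext‖ := norm_pos_iff.2 hQyn0
  have hQynval : ‖Q ynext‖ = ‖Q ylim‖⁻¹ * ‖Q (Q ylim)‖ := by
    rw [hynext, ContinuousLinearMap.map_smul_of_tower, norm_smul, norm_inv, norm_norm]
  -- convergence of `y (n+1)`
  have hynconv : Tendsto (fun j => yseq R A v (φ (ψ (θ' j)) + 1)) atTop (𝓝 ynext) := by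
    have h1 : Tendsto (fun j => (‖((R.ρ (Bseq A (φ (ψ (θ' j)) + 1)) : (V →L[ℂ] V)ˣ) : V →L[ℂ] V)
        (yseq R A v (φ (ψ (θ' j))))‖)⁻¹ •
        ((R.ρ (Bseq A (φ (ψ (θ' j)) + 1)) : (V →L[ℂ] V)ˣ) : V →L[ℂ] V)
        (yseq R A v (φ (ψ (θ' j))))) atTop (𝓝 ynext) :=
      ((happly.norm.inv₀ hQyn).smul happly)
    exact h1.congr (fun j => (yseq_succ R A hv _).symm)
  have happly2 : Tendsto (fun j =>
      ((R.ρ (Bseq A ((φ (ψ (θ' j)) + 1) + 1)) : (V →L[ℂ] V)ˣ) : V →L[ℂ] V)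
        (yseq R A v (φ (ψ (θ' j)) + 1))) atTop (𝓝 (Q ynext)) := by
    have hρ2' : Tendsto (fun j =>
        ((R.ρ (Bseq A ((φ (ψ (θ' j)) + 1) + 1)) : (V →L[ℂ] V)ˣ) : V →L[ℂ] V)) atTop (𝓝 Q) := hρ2
    exact (isBoundedBilinearMap_apply.continuous.tendsto (Q, ynext)).comp
      (hρ2'.prodMk_nhds hynconv)
  refine ⟨Real.log ‖Q ylim‖, Real.log ‖Q ynext‖, ?_, ?_, ?_, ?_⟩
  · -- c ≤ c'
    have h2 : ‖Q ylim‖ ^ 2 ≤ ‖Q (Q ylim)‖ * ‖ylim‖ := sa_norm_sq_le hQsa ylim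
    rw [hylimn, mul_one] at h2
    refine (Real.log_le_log_iff hQypos hQynpos).2 ?_
    rw [hQynval, le_inv_mul_iff₀ hQypos]
    calc ‖Q ylim‖ * ‖Q ylim‖ = ‖Q ylim‖ ^ 2 := (sq _).symm
      _ ≤ ‖Q (Q ylim)‖ := h2
  · -- equality case
    intro hcc
    have hnceq : ‖Q ylim‖ = ‖Q ynext‖ := by
      have := congrArg Real.exp hcc
      rwa [Real.exp_log hQypos, Real.exp_log hQynpos] at this
    have hQQeq : ‖Q (Q ylim)‖ = ‖Q ylim‖ ^ 2 := by
      have h3 : ‖Q ylim‖ = ‖Q ylim‖⁻¹ * ‖Q (Q ylim)‖ := by rw [← hQynval, ← hnceq]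
      field_simp at h3
      rw [sq]
      linarith [h3]
    have heig : Q (Q ylim) = ((‖Q ylim‖ ^ 2 : ℝ) : ℂ) • ylim := sa_eq_smul hQsa hylimn hQy0 hQQeq
    set z : V := ((R.ρ (g⁻¹) : (V →L[ℂ] V)ˣ) : V →L[ℂ] V) ylim with hzdef
    have hz0 : z ≠ 0 := unit_apply_ne_zero _ hylim0
    have hQQform : Q (Q ylim)
        = ((R.ρ g : (V →L[ℂ] V)ˣ) : V →L[ℂ] V) ((exp ((2:ℂ) • R.ΛV)) z) := by
      have huu : u * u = g * expUnit ((2:ℂ) • Λ) * g⁻¹ := by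
        rw [hu, expUnit_two_smul]; group
      have h4 : Q (Q ylim) = ((R.ρ (u * u) : (V →L[ℂ] V)ˣ) : V →L[ℂ] V) ylim := by
        rw [map_mul, Units.val_mul, ContinuousLinearMap.mul_apply]
      rw [h4, huu, map_mul, map_mul, Units.val_mul, Units.val_mul,
        ContinuousLinearMap.mul_apply, ContinuousLinearMap.mul_apply,
        rho_expUnit_two_val, hzdef]
    have hfinal : (exp ((2:ℂ) • R.ΛV)) z = ((‖Q ylim‖ ^ 2 : ℝ) : ℂ) • z := by
      have h5 := congrArg (fun x => (((R.ρ g)⁻¹ : (V →L[ℂ] V)ˣ) : V →L[ℂ] V) x)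
        (hQQform.symm.trans heig)
      simp only [map_smul] at h5
      rw [unit_inv_apply_apply] at h5
      rw [h5, hzdef, map_inv]
    refine Module.End.hasEigenvalue_of_hasEigenvector ⟨?_, hz0⟩
    rw [Module.End.mem_eigenspace_iff]
    show (exp ((2:ℂ) • R.ΛV)) z = _
    rw [hfinal, Real.exp_log hQypos]
  · -- Tendsto to c
    have h3 := (Real.continuousAt_log hQyn).tendsto.comp happly.norm
    exact h3.congr (fun j => (aseq_eq R A hv _).symm)
  · -- Tendsto to c'
    have h3 := (Real.continuousAt_log hQynn).tendsto.comp happly2.norm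
    exact h3.congr (fun j => (aseq_eq R A hv _).symm)

/-! ### The discrete weight theorem -/

theorem weight_of_condStar {Λ : E →L[ℂ] E} {A : ℕ → (E →L[ℂ] E)ˣ}
    (hstar : CondStar A Λ) (R : Rep Λ V) {v : V} (hv : v ≠ 0) :
    ∃ d : ℝ, Tendsto (fun i : ℕ => fseq R A v i / i) atTop (𝓝 d) := by
  classical
  set T : Set ℝ := {c : ℝ | Module.End.HasEigenvalue
    (↑(exp ((2:ℂ) • R.ΛV)) : Module.End ℂ V) (((Real.exp c) ^ 2 : ℝ) : ℂ)} with hT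
  have hTfin : T.Finite := by
    have h1 : Set.Finite (Module.End.HasEigenvalue
        (↑(exp ((2:ℂ) • R.ΛV)) : Module.End ℂ V)) :=
      Module.End.finite_hasEigenvalue _
    have h2 : T = (fun c : ℝ => (((Real.exp c) ^ 2 : ℝ) : ℂ)) ⁻¹'
        (Module.End.HasEigenvalue (↑(exp ((2:ℂ) • R.ΛV)) : Module.End ℂ V)) := rfl
    rw [h2]
    apply Set.Finite.preimage ?_ h1
    intro x _ y _ hxy
    have hxy' : ((((Real.exp x) ^ 2 : ℝ)) : ℂ) = (((Real.exp y) ^ 2 : ℝ) : ℂ) := hxy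
    have h3 : (Real.exp x) ^ 2 = (Real.exp y) ^ 2 := by exact_mod_cast hxy'
    have := Real.exp_pos x
    have := Real.exp_pos y
    have h4 : Real.exp x = Real.exp y := by nlinarith
    exact Real.exp_injective h4
  -- near-monotonicity
  have hstep : ∀ ε : ℝ, 0 < ε → ∀ᶠ i in atTop, aseq R A v i - ε < aseq R A v (i + 1) := by
    intro ε hε
    by_contra hcon
    rw [Filter.not_eventually] at hcon
    obtain ⟨φ, hφ, hφP⟩ := Filter.extraction_of_frequently_atTop hcon
    obtain ⟨θ, hθ, c, c', hcc', _, hc, hc'⟩ := master hstar R hv hφ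
    have h1 : ∀ j, aseq R A v (φ (θ j) + 1) ≤ aseq R A v (φ (θ j)) - ε := fun j =>
      not_lt.1 (hφP (θ j))
    have h2 : c' ≤ c - ε :=
      le_of_tendsto_of_tendsto' hc' (hc.sub tendsto_const_nhds) h1
    linarith
  -- boundedness
  have hbdd : ∃ C : ℝ, ∀ᶠ i in atTop, |aseq R A v i| ≤ C := by
    by_contra hcon
    push_neg at hcon
    have hfreq : ∀ n : ℕ, ∃ᶠ i in atTop, (n : ℝ) < |aseq R A v i| := by
      intro n
      have h0 := hcon n
      exact h0
    obtain ⟨φ, hφ, hφP⟩ := Filter.extraction_forall_of_frequently hfreq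
    obtain ⟨θ, hθ, c, c', _, _, hc, _⟩ := master hstar R hv hφ
    have h1 : Tendsto (fun j => |aseq R A v (φ (θ j))|) atTop (𝓝 |c|) := hc.abs
    have h3 : Tendsto (fun j => ((θ j : ℕ) : ℝ)) atTop atTop :=
      tendsto_natCast_atTop_atTop.comp hθ.tendsto_atTop
    have h4 : Tendsto (fun j => |aseq R A v (φ (θ j))|) atTop atTop :=
      tendsto_atTop_mono (fun j => le_of_lt (hφP (θ j))) h3
    exact not_tendsto_atTop_of_tendsto_nhds h1 h4
  obtain ⟨C, hC⟩ := hbdd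
  have hbdd_le : IsBoundedUnder (· ≤ ·) atTop (aseq R A v) :=
    ⟨C, eventually_map.2 (hC.mono fun i hi => (abs_le.1 hi).2)⟩
  have hbdd_ge : IsBoundedUnder (· ≥ ·) atTop (aseq R A v) :=
    ⟨-C, eventually_map.2 (hC.mono fun i hi => (abs_le.1 hi).1)⟩
  have hlim : ∃ d : ℝ, Tendsto (aseq R A v) atTop (𝓝 d) := by
    set l := liminf (aseq R A v) atTop with hldef
    set L := limsup (aseq R A v) atTop with hLdef
    have hlL : l ≤ L := liminf_le_limsup hbdd_le hbdd_ge
    rcases eq_or_lt_of_le hlL with heq | hlt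
    · exact ⟨l, tendsto_of_liminf_eq_limsup rfl heq.symm hbdd_le hbdd_ge⟩
    exfalso
    obtain ⟨μ, hμIoo, hμT⟩ : ∃ μ, μ ∈ Set.Ioo l L ∧ μ ∉ T := by
      obtain ⟨μ, hμ⟩ := ((Set.Ioo_infinite hlt).diff hTfin).nonempty
      exact ⟨μ, hμ.1, hμ.2⟩
    have hpairs : ∀ n : ℕ, ∃ᶠ i in atTop,
        |aseq R A v i - μ| < 1 / (n + 1) ∧ |aseq R A v (i + 1) - μ| < 1 / (n + 1) := by
      intro n
      have hε : (0:ℝ) < 1 / (n + 1) := by positivity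
      set ε : ℝ := 1 / (n + 1)
      rw [Filter.frequently_atTop]
      intro N
      obtain ⟨N₁, hN₁⟩ := eventually_atTop.1 (hstep (ε / 2) (by positivity))
      have hfr1 : ∃ᶠ i in atTop, μ < aseq R A v i :=
        frequently_lt_of_lt_limsup hbdd_ge.isCoboundedUnder_le hμIoo.2
      obtain ⟨i₁, hi₁M, hi₁⟩ := (Filter.frequently_atTop.1 hfr1) (max N N₁)
      have hfr2 : ∃ᶠ i in atTop, aseq R A v i < μ :=
        frequently_lt_of_liminf_lt hbdd_le.isCoboundedUnder_ge hμIoo.1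
      obtain ⟨i₂, hi₂, hi₂lt⟩ := (Filter.frequently_atTop.1 hfr2) (i₁ + 1)
      have hexP : ∃ j, i₁ ≤ j ∧ aseq R A v (j + 1) < μ := by
        refine ⟨i₂ - 1, by omega, ?_⟩
        have h5 : i₂ - 1 + 1 = i₂ := by omega
        rw [h5]; exact hi₂lt
      set j₀ := Nat.find hexP with hj₀def
      have hj₀ := Nat.find_spec hexP
      have hge : μ ≤ aseq R A v j₀ := by
        rcases eq_or_lt_of_le hj₀.1 with h | h
        · rw [h] at hi₁; exact le_of_lt hi₁
        · have h1 := Nat.find_min hexP (show j₀ - 1 < j₀ by omega)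
          have h2 : i₁ ≤ j₀ - 1 := by omega
          have h3 : ¬ aseq R A v (j₀ - 1 + 1) < μ := fun hcon => h1 ⟨h2, hcon⟩
          have h4 : j₀ - 1 + 1 = j₀ := by omega
          rw [h4] at h3
          exact not_lt.1 h3
      have hstepj : aseq R A v j₀ - ε / 2 < aseq R A v (j₀ + 1) := by
        apply hN₁
        have : N₁ ≤ i₁ := le_trans (le_max_right _ _) hi₁M
        omega
      refine ⟨j₀, by omega, ?_, ?_⟩
      · rw [abs_sub_lt_iff]
        constructor
        · linarith [hj₀.2, hstepj, hε]
        · linarith [hge, hε]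
      · rw [abs_sub_lt_iff]
        constructor
        · linarith [hj₀.2, hε]
        · linarith [hstepj, hge]
    obtain ⟨φ, hφ, hφP⟩ := Filter.extraction_forall_of_frequently hpairs
    have h0 : Tendsto (fun n : ℕ => 1 / ((n:ℝ) + 1)) atTop (𝓝 0) :=
      tendsto_one_div_add_atTop_nhds_zero_nat
    have htend1 : Tendsto (fun n => aseq R A v (φ n)) atTop (𝓝 μ) := by
      have h5 : Tendsto (fun n => aseq R A v (φ n) - μ) atTop (𝓝 0) :=
        squeeze_zero_norm (fun n => le_of_lt (hφP n).1) h0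
      simpa using h5.add (tendsto_const_nhds (x := μ))
    have htend2 : Tendsto (fun n => aseq R A v (φ n + 1)) atTop (𝓝 μ) := by
      have h5 : Tendsto (fun n => aseq R A v (φ n + 1) - μ) atTop (𝓝 0) :=
        squeeze_zero_norm (fun n => le_of_lt (hφP n).2) h0
      simpa using h5.add (tendsto_const_nhds (x := μ))
    obtain ⟨θ, hθ, c, c', hcc, hT', hc, hc'⟩ := master hstar R hv hφ
    have e1 : c = μ := tendsto_nhds_unique hc (htend1.comp hθ.tendsto_atTop)
    have e2 : c' = μ := tendsto_nhds_unique hc' (htend2.comp hθ.tendsto_atTop)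
    have h9 := hT' (e1.trans e2.symm)
    rw [e1] at h9
    exact hμT h9
  -- Cesàro
  obtain ⟨d, htend⟩ := hlim
  refine ⟨d, ?_⟩
  have hsum : ∀ n : ℕ, fseq R A v n
      = fseq R A v 0 + ∑ i ∈ Finset.range n, aseq R A v i := by
    intro n
    have h1 : ∑ i ∈ Finset.range n, aseq R A v i = fseq R A v n - fseq R A v 0 :=
      Finset.sum_range_sub (fun i => fseq R A v i) n
    rw [h1]; ring
  have hces := htend.cesaro
  have hzero : Tendsto (fun n : ℕ => fseq R A v 0 / n) atTop (𝓝 0) :=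
    tendsto_const_div_atTop_nhds_zero_nat _
  have hfin := hzero.add hces
  rw [zero_add] at hfin
  apply hfin.congr
  intro n
  rw [hsum n, add_div]
  ring


/-! ### Condition (*) from (**) -/

theorem condStar_of_condStarStar {Λ : E →L[ℂ] E} {Ap : ℝ → (E →L[ℂ] E)ˣ}
    (hss : CondStarStar Ap Λ) : CondStar (fun i : ℕ => Ap i) Λ := by
  intro φ hφ
  obtain ⟨ψ, hψ, g, hg, hunif⟩ := hss (fun j => (φ j : ℝ))
    (tendsto_natCast_atTop_atTop.comp hφ.tendsto_atTop)
  refine ⟨ψ, hψ, g, hg, ?_, ?_⟩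
  · have h1 := hunif.tendsto_at (x := (1:ℝ)) (by norm_num)
    have e1 : (g * expUnit (((1:ℝ) : ℂ) • Λ) * g⁻¹ : (E →L[ℂ] E)ˣ)
        = g * expUnit Λ * g⁻¹ := by norm_num
    rw [e1] at h1
    convert h1 using 2 with j
    have : (φ (ψ j) : ℝ) + 1 = ((φ (ψ j) + 1 : ℕ) : ℝ) := by push_cast; ring
    simp only [Bseq, Nat.add_sub_cancel, ← this]
  · have h1 := hunif.tendsto_at (x := (1:ℝ)) (by norm_num)
    have h2 := hunif.tendsto_at (x := (2:ℝ)) (by norm_num)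
    have e1 : (g * expUnit (((1:ℝ) : ℂ) • Λ) * g⁻¹ : (E →L[ℂ] E)ˣ)
        = g * expUnit Λ * g⁻¹ := by norm_num
    rw [e1] at h1
    have hinv : Tendsto (fun j => Ring.inverse
        ((Ap ((φ (ψ j) : ℝ) + 1) * (Ap (φ (ψ j) : ℝ))⁻¹ : (E →L[ℂ] E)ˣ) : E →L[ℂ] E)) atTop
        (𝓝 (Ring.inverse ((g * expUnit Λ * g⁻¹ : (E →L[ℂ] E)ˣ) : E →L[ℂ] E))) :=
      (NormedRing.inverse_continuousAt (g * expUnit Λ * g⁻¹)).tendsto.comp h1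
    simp only [Ring.inverse_unit] at hinv
    have key : ∀ j, (Bseq (fun i : ℕ => Ap i) (φ (ψ j) + 2) : E →L[ℂ] E)
        = ((Ap ((φ (ψ j) : ℝ) + 2) * (Ap (φ (ψ j) : ℝ))⁻¹ : (E →L[ℂ] E)ˣ) : E →L[ℂ] E) *
          (((Ap ((φ (ψ j) : ℝ) + 1) * (Ap (φ (ψ j) : ℝ))⁻¹ : (E →L[ℂ] E)ˣ)⁻¹ :
              (E →L[ℂ] E)ˣ) : E →L[ℂ] E) := by
      intro j
      rw [← Units.val_mul]
      congr 1
      have e2 : (φ (ψ j) : ℝ) + 2 = ((φ (ψ j) + 2 : ℕ) : ℝ) := by push_cast; ring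
      have e3 : (φ (ψ j) : ℝ) + 1 = ((φ (ψ j) + 1 : ℕ) : ℝ) := by push_cast; ring
      rw [e2, e3]
      show Bseq (fun i : ℕ => Ap i) (φ (ψ j) + 2) = _
      have e5 : φ (ψ j) + 2 - 1 = φ (ψ j) + 1 := rfl
      simp only [Bseq, e5]
      group
    have lim_eq : ((g * expUnit ((2:ℂ) • Λ) * g⁻¹ : (E →L[ℂ] E)ˣ) : E →L[ℂ] E) *
        (((g * expUnit Λ * g⁻¹ : (E →L[ℂ] E)ˣ)⁻¹ : (E →L[ℂ] E)ˣ) : E →L[ℂ] E)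
        = ((g * expUnit Λ * g⁻¹ : (E →L[ℂ] E)ˣ) : E →L[ℂ] E) := by
      rw [← Units.val_mul]
      congr 1
      rw [expUnit_two_smul]
      group
    have e4 : (g * expUnit (((2:ℝ) : ℂ) • Λ) * g⁻¹ : (E →L[ℂ] E)ˣ)
        = g * expUnit ((2:ℂ) • Λ) * g⁻¹ := by norm_num
    rw [e4] at h2
    have hmul := h2.mul hinv
    rw [lim_eq] at hmul
    convert hmul using 2 with j
    exact key j

/-! ### Bounded oscillation along the path -/

theorem path_gap_bound {Λ : E →L[ℂ] E} {Ap : ℝ → (E →L[ℂ] E)ˣ}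
    (hss : CondStarStar Ap Λ) (R : Rep Λ V) {v : V} (hv : v ≠ 0) :
    ∃ C : ℝ, ∀ᶠ i : ℕ in atTop, ∀ s' ∈ Set.Icc (0:ℝ) 1,
      |Real.log ‖(R.ρ (Ap ((i : ℝ) + s')) : V →L[ℂ] V) v‖
        - Real.log ‖(R.ρ (Ap (i : ℝ)) : V →L[ℂ] V) v‖| ≤ C := by
  classical
  set A : ℕ → (E →L[ℂ] E)ˣ := fun i : ℕ => Ap i with hA
  -- rewriting the gap
  have hgap_eq : ∀ (i : ℕ) (s' : ℝ),
      Real.log ‖(R.ρ (Ap ((i : ℝ) + s')) : V →L[ℂ] V) v‖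
        - Real.log ‖(R.ρ (Ap (i : ℝ)) : V →L[ℂ] V) v‖
      = Real.log ‖(R.ρ (Ap ((i : ℝ) + s') * (Ap (i : ℝ))⁻¹) : V →L[ℂ] V)
          (yseq R A v i)‖ := by
    intro i s'
    have h1 : (R.ρ (Ap ((i : ℝ) + s') * (Ap (i : ℝ))⁻¹) : V →L[ℂ] V) (yseq R A v i)
        = ‖wseq R A v i‖⁻¹ • ((R.ρ (Ap ((i : ℝ) + s')) : V →L[ℂ] V) v) := by
      rw [show yseq R A v i = ‖wseq R A v i‖⁻¹ • wseq R A v i from rfl,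
        ContinuousLinearMap.map_smul_of_tower]
      congr 1
      rw [map_mul, map_inv, Units.val_mul, ContinuousLinearMap.mul_apply]
      rw [show wseq R A v i = (R.ρ (A i) : V →L[ℂ] V) v from rfl]
      rw [show A i = Ap (i : ℝ) from rfl, unit_inv_apply_apply]
    have h2 : ‖(R.ρ (Ap ((i : ℝ) + s')) : V →L[ℂ] V) v‖ ≠ 0 :=
      norm_ne_zero_iff.2 (unit_apply_ne_zero _ hv)
    rw [h1, norm_smul, norm_inv, norm_norm,
      Real.log_mul (inv_ne_zero (wseq_norm_ne R A hv i)) h2, Real.log_inv]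
    show _ = -Real.log ‖wseq R A v i‖ + _
    rw [show wseq R A v i = (R.ρ (Ap (i:ℝ)) : V →L[ℂ] V) v from rfl]
    ring
  by_contra hcon
  push_neg at hcon
  have hfreq : ∀ n : ℕ, ∃ᶠ i : ℕ in atTop, ∃ s' ∈ Set.Icc (0:ℝ) 1,
      (n : ℝ) < |Real.log ‖(R.ρ (Ap ((i : ℝ) + s')) : V →L[ℂ] V) v‖
        - Real.log ‖(R.ρ (Ap (i : ℝ)) : V →L[ℂ] V) v‖| := by
    intro n
    have h0 := hcon (n : ℝ)
    exact h0
  obtain ⟨φ, hφ, hφP⟩ := Filter.extraction_forall_of_frequently hfreq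
  choose s hs hsgap using hφP
  obtain ⟨ψ, hψ, g, hgu, hunif⟩ := hss (fun n => (φ n : ℝ))
    (tendsto_natCast_atTop_atTop.comp hφ.tendsto_atTop)
  obtain ⟨p, hps, θ, hθ, hconv⟩ :=
    (((isCompact_sphere (0:V) 1).prod (isCompact_Icc (a := (0:ℝ)) (b := 1))).tendsto_subseq
      (x := fun j => (yseq R A v (φ (ψ j)), s (ψ j)))
      (fun j => ⟨by simp only [Metric.mem_sphere, dist_zero_right]; exact yseq_norm R A hv _,
        hs (ψ j)⟩))
  obtain ⟨ylim, slim⟩ := p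
  have hyconv : Tendsto (fun j => yseq R A v (φ (ψ (θ j)))) atTop (𝓝 ylim) :=
    (continuous_fst.tendsto _).comp hconv
  have hsconv : Tendsto (fun j => s (ψ (θ j))) atTop (𝓝 slim) :=
    (continuous_snd.tendsto _).comp hconv
  have hylimn : ‖ylim‖ = 1 := by simpa using hps.1
  have hylim0 : ylim ≠ 0 := by
    intro h; rw [h, norm_zero] at hylimn; norm_num at hylimn
  have hslim : slim ∈ Set.Icc (0:ℝ) 1 := hps.2
  -- uniform convergence along the subsequence θ
  have hunif' : TendstoUniformlyOn
      (fun j t => ((Ap ((φ (ψ (θ j)) : ℝ) + t) * (Ap (φ (ψ (θ j)) : ℝ))⁻¹ :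
        (E →L[ℂ] E)ˣ) : E →L[ℂ] E))
      (fun t => ((g * expUnit ((t : ℂ) • Λ) * g⁻¹ : (E →L[ℂ] E)ˣ) : E →L[ℂ] E))
      atTop (Set.Icc (0 : ℝ) 2) :=
    fun u hu => hθ.tendsto_atTop.eventually (hunif u hu)
  have hlimcont : ContinuousWithinAt
      (fun t : ℝ => ((g * expUnit ((t : ℂ) • Λ) * g⁻¹ : (E →L[ℂ] E)ˣ) : E →L[ℂ] E))
      (Set.Icc (0 : ℝ) 2) slim := by
    apply Continuous.continuousWithinAt
    have hfun : (fun t : ℝ => ((g * expUnit ((t : ℂ) • Λ) * g⁻¹ : (E →L[ℂ] E)ˣ) : E →L[ℂ] E))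
        = fun t : ℝ => (g : E →L[ℂ] E) * exp ((t : ℂ) • Λ) *
            ((g⁻¹ : (E →L[ℂ] E)ˣ) : E →L[ℂ] E) := by
      funext t
      rw [Units.val_mul, Units.val_mul]
      rfl
    rw [hfun]
    exact (continuous_const.mul ((continuous_iff_continuousAt.2 fun x => (exp_analytic (𝕂 := ℂ) x).continuousAt).comp
      (Complex.continuous_ofReal.smul continuous_const))).mul continuous_const
  have hsmem : Tendsto (fun j => s (ψ (θ j))) atTop (𝓝[Set.Icc (0:ℝ) 2] slim) := by
    rw [tendsto_nhdsWithin_iff]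
    refine ⟨hsconv, Filter.Eventually.of_forall (fun j => ?_)⟩
    have := hs (ψ (θ j))
    constructor
    · exact this.1
    · linarith [this.2]
  have hDval := hunif'.tendsto_comp hlimcont hsmem
  set ulim : (E →L[ℂ] E)ˣ := g * expUnit ((slim : ℂ) • Λ) * g⁻¹ with hulim
  have hDunits : Tendsto
      (fun j => Ap ((φ (ψ (θ j)) : ℝ) + s (ψ (θ j))) * (Ap (φ (ψ (θ j)) : ℝ))⁻¹)
      atTop (𝓝 ulim) := tendsto_units_of_tendsto_val hDval
  have hρD : Tendsto (fun j =>
      ((R.ρ (Ap ((φ (ψ (θ j)) : ℝ) + s (ψ (θ j))) * (Ap (φ (ψ (θ j)) : ℝ))⁻¹) :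
        (V →L[ℂ] V)ˣ) : V →L[ℂ] V)) atTop (𝓝 ((R.ρ ulim : (V →L[ℂ] V)ˣ) : V →L[ℂ] V)) :=
    (R.continuous_ρ.tendsto ulim).comp hDunits
  have happly : Tendsto (fun j =>
      ((R.ρ (Ap ((φ (ψ (θ j)) : ℝ) + s (ψ (θ j))) * (Ap (φ (ψ (θ j)) : ℝ))⁻¹) :
        (V →L[ℂ] V)ˣ) : V →L[ℂ] V) (yseq R A v (φ (ψ (θ j))))) atTop
      (𝓝 (((R.ρ ulim : (V →L[ℂ] V)ˣ) : V →L[ℂ] V) ylim)) :=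
    (isBoundedBilinearMap_apply.continuous.tendsto (_, ylim)).comp (hρD.prodMk_nhds hyconv)
  have hQy0 : ((R.ρ ulim : (V →L[ℂ] V)ˣ) : V →L[ℂ] V) ylim ≠ 0 :=
    unit_apply_ne_zero (R.ρ ulim) hylim0
  have hQyn : ‖((R.ρ ulim : (V →L[ℂ] V)ˣ) : V →L[ℂ] V) ylim‖ ≠ 0 := norm_ne_zero_iff.2 hQy0
  have hloggap : Tendsto (fun j =>
      |Real.log ‖(R.ρ (Ap ((φ (ψ (θ j)) : ℝ) + s (ψ (θ j)))) : V →L[ℂ] V) v‖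
        - Real.log ‖(R.ρ (Ap (φ (ψ (θ j)) : ℝ)) : V →L[ℂ] V) v‖|) atTop
      (𝓝 |Real.log ‖((R.ρ ulim : (V →L[ℂ] V)ˣ) : V →L[ℂ] V) ylim‖|) := by
    have h3 := ((Real.continuousAt_log hQyn).tendsto.comp happly.norm).abs
    apply h3.congr
    intro j
    simp only [Function.comp_apply]
    rw [← hgap_eq]
  have hdiverge : Tendsto (fun j =>
      |Real.log ‖(R.ρ (Ap ((φ (ψ (θ j)) : ℝ) + s (ψ (θ j)))) : V →L[ℂ] V) v‖
        - Real.log ‖(R.ρ (Ap (φ (ψ (θ j)) : ℝ)) : V →L[ℂ] V) v‖|) atTop atTop := by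
    apply tendsto_atTop_mono (fun j => le_of_lt (hsgap (ψ (θ j))))
    exact tendsto_natCast_atTop_atTop.comp (hψ.comp hθ).tendsto_atTop
  exact not_tendsto_atTop_of_tendsto_nhds hloggap hdiverge


/-- Let `A : [0,∞) → G` be a continuous path with `A(0) = Id` satisfying
condition (**). Then for every `v ≠ 0` the limit `d(v) = lim_{t→∞} t⁻¹ log ‖ρ(A(t)) v‖`
exists; moreover the integer-time sequence `(A(i))` satisfies condition (*), and `d(v)`
agrees with the weight computed from that sequence. -/
theorem path_weight (Λ : E →L[ℂ] E) (hΛ : IsSelfAdjoint Λ)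
    (Ap : ℝ → (E →L[ℂ] E)ˣ) (hcont : Continuous fun t : ℝ => (Ap t : E →L[ℂ] E))
    (hAp0 : Ap 0 = 1) (hss : CondStarStar Ap Λ) (R : Rep Λ V) :
    CondStar (fun i : ℕ => Ap i) Λ ∧
    ∀ v : V, v ≠ 0 → ∃ d : ℝ,
      Tendsto (fun t : ℝ => Real.log ‖(R.ρ (Ap t) : V →L[ℂ] V) v‖ / t) atTop (𝓝 d) ∧
      Tendsto (fun i : ℕ => Real.log ‖(R.ρ (Ap i) : V →L[ℂ] V) v‖ / i) atTop (𝓝 d) := by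
  refine ⟨condStar_of_condStarStar hss, ?_⟩
  intro v hv
  obtain ⟨d, hd⟩ := weight_of_condStar (condStar_of_condStarStar hss) R (v := v) hv
  refine ⟨d, ?_, hd⟩
  obtain ⟨C, hC⟩ := path_gap_bound hss R hv
  obtain ⟨N, hN⟩ := eventually_atTop.1 hC
  have hA : Tendsto (fun t : ℝ =>
      Real.log ‖(R.ρ (Ap ((⌊t⌋₊ : ℕ) : ℝ)) : V →L[ℂ] V) v‖ / ((⌊t⌋₊ : ℕ) : ℝ))
      atTop (𝓝 d) := hd.comp tendsto_nat_floor_atTop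
  have hBtend : Tendsto (fun t : ℝ => ((⌊t⌋₊ : ℕ) : ℝ) / t) atTop (𝓝 1) :=
    tendsto_nat_floor_div_atTop
  have hmain : Tendsto (fun t : ℝ =>
      Real.log ‖(R.ρ (Ap ((⌊t⌋₊ : ℕ) : ℝ)) : V →L[ℂ] V) v‖ / t) atTop (𝓝 d) := by
    have h1 := hA.mul hBtend
    rw [mul_one] at h1
    apply h1.congr'
    filter_upwards [eventually_ge_atTop (1:ℝ)] with t ht
    have hpos : 0 < ⌊t⌋₊ := Nat.floor_pos.2 ht
    have h2 : ((⌊t⌋₊ : ℕ) : ℝ) ≠ 0 := by exact_mod_cast hpos.ne'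
    field_simp
  have hdiff : Tendsto (fun t : ℝ =>
      (Real.log ‖(R.ρ (Ap t) : V →L[ℂ] V) v‖
        - Real.log ‖(R.ρ (Ap ((⌊t⌋₊ : ℕ) : ℝ)) : V →L[ℂ] V) v‖) / t) atTop (𝓝 0) := by
    apply squeeze_zero_norm' (a := fun t : ℝ => C / t)
    · filter_upwards [eventually_ge_atTop ((N:ℝ) + 1)] with t ht
      have ht1 : (1:ℝ) ≤ t := by
        have : (0:ℝ) ≤ N := Nat.cast_nonneg N
        linarith
      have ht0 : (0:ℝ) ≤ t := by linarith
      have htpos : (0:ℝ) < t := by linarith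
      have hiN : N ≤ ⌊t⌋₊ := Nat.le_floor (by linarith)
      have hs0 : 0 ≤ t - ((⌊t⌋₊ : ℕ) : ℝ) := sub_nonneg.2 (Nat.floor_le ht0)
      have hs1 : t - ((⌊t⌋₊ : ℕ) : ℝ) ≤ 1 := by
        have := Nat.lt_floor_add_one t
        linarith
      have hb := hN ⌊t⌋₊ hiN (t - ((⌊t⌋₊ : ℕ) : ℝ)) ⟨hs0, hs1⟩
      rw [show ((⌊t⌋₊ : ℕ) : ℝ) + (t - ((⌊t⌋₊ : ℕ) : ℝ)) = t by ring] at hb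
      rw [Real.norm_eq_abs, abs_div, abs_of_pos htpos]
      gcongr
    · exact tendsto_const_nhds.div_atTop tendsto_id
  have hsum := hdiff.add hmain
  rw [zero_add] at hsum
  apply hsum.congr
  intro t
  ring

end CSW
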